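/- Let A be a set and let x, y : ℤ → A satisfy x(i + p) = x(i) for all i ∈ ℤ and y(i + q) = y(i) for all i ∈ ℤ, where p, q ≥ 1. If x(0) ≠ y(0), then there exists an integer i with 1 ≤ i ≤ p + q − 1 such that x(i) ≠ y(i). In particular, if two such periodic configurations differ at some position, then they differ at two distinct positions within distance p + q − 1 of each other. -/
import Mathlib


/-- If `x` has period `p ≥ 1`, `y` has period `q ≥ 1`, and `x` and `y`
differ at position `0`, then they differ at some position `i` with `1 ≤ i ≤ p + q − 1`. -/
theorem stmt4 {A : Type*} (x y : ℤ → A) (p q : ℤ)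
    (hp : 1 ≤ p) (hq : 1 ≤ q)
    (hx : ∀ i : ℤ, x (i + p) = x i) (hy : ∀ i : ℤ, y (i + q) = y i)
    (h0 : x 0 ≠ y 0) :
    ∃ i : ℤ, 1 ≤ i ∧ i ≤ p + q - 1 ∧ x i ≠ y i := by
  by_contra hcon
  push_neg at hcon
  apply h0
  -- y is invariant under adding multiples of q
  have hmulq : ∀ (i n : ℤ), y (i + n * q) = y i := by
    intro i n
    have hper : Function.Periodic y q := hy
    exact (hper.int_mul n) i
  have hqd : ∀ i : ℤ, q ∣ i → y i = y 0 := by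
    rintro i ⟨n, hn⟩
    have := hmulq 0 n
    rw [zero_add] at this
    rw [hn, mul_comm, this]
  -- key step: y is p-periodic away from multiples of q
  have step1 : ∀ i : ℤ, ¬ q ∣ i → y (i + p) = y i := by
    intro i hi
    have hq0 : 0 < q := by omega
    have hj : i % q ≠ 0 := fun h => hi (Int.dvd_of_emod_eq_zero h)
    have h1 : 1 ≤ i % q := by
      have := Int.emod_nonneg i (by omega : q ≠ 0); omega
    have h2 : i % q ≤ q - 1 := by
      have := Int.emod_lt_of_pos i hq0; omega
    have key : ∀ j : ℤ, y j = y (j % q) := by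
      intro j
      have hid : j % q + (j / q) * q = j := by
        have := Int.mul_ediv_add_emod j q; linarith
      calc y j = y (j % q + (j / q) * q) := by rw [hid]
        _ = y (j % q) := hmulq _ _
    have hip : (i + p) % q = (i % q + p) % q := by
      conv_lhs => rw [show i + p = (i % q + p) + (i/q)*q by
        have := Int.mul_ediv_add_emod i q; linarith]
      rw [Int.add_mul_emod_self_right]
    have e1 : y (i + p) = y (i % q + p) := by
      rw [key (i + p), key (i % q + p), hip]
    have e2 : x (i % q + p) = y (i % q + p) :=
      hcon _ (by omega) (by omega)
    have e3 : x (i % q) = y (i % q) := hcon _ h1 (by omega)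
    rw [e1, ← e2, hx, e3, ← key]
  -- chain: y (n*p) = y p or y 0 = y p
  have chain : ∀ n : ℕ, 1 ≤ n → y 0 = y p ∨ y ((n : ℤ) * p) = y p := by
    intro n hn
    induction n with
    | zero => omega
    | succ m ih =>
      rcases Nat.eq_or_lt_of_le hn with h | h
      · right; rw [← h]; norm_num
      · have hm : 1 ≤ m := by omega
        rcases ih hm with h' | h'
        · exact Or.inl h'
        · by_cases hd : q ∣ (m : ℤ) * p
          · left; rw [← h', hqd _ hd]
          · right
            have : ((m : ℕ) + 1 : ℤ) * p = (m : ℤ) * p + p := by ring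
            push_cast
            rw [this, step1 _ hd, h']
  -- conclude
  have hq' : ((q.toNat : ℤ)) = q := Int.toNat_of_nonneg (by omega)
  have hqn : 1 ≤ q.toNat := by omega
  have hfin : y 0 = y p := by
    rcases chain q.toNat hqn with h | h
    · exact h
    · rw [hq'] at h
      rw [← h, hqd _ (dvd_mul_right q p)]
  have hxp : x 0 = x p := by
    have := hx 0; rw [zero_add] at this; exact this.symm
  rw [hxp, hcon p hp (by omega), ← hfin]
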